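/- The map Φ is injective on ℝ², and its range is exactly the open region {(X,Y) ∈ ℝ² : 0 < Y < 2·𝒴*(X)}; hence Φ is a bijection from ℝ² onto this subset of the upper half plane. -/

import Mathlib

noncomputable section

open Real MeasureTheory

/-- The real cube root. -/
def cbrt (x : ℝ) : ℝ := Real.sign x * |x| ^ ((1 : ℝ) / 3)

/-- The profile `Ψ₁`, inverse of `X ↦ -X - X³`. -/
def Psi1 (X : ℝ) : ℝ :=
  cbrt (-X / 2 + Real.sqrt (1 / 27 + X ^ 2 / 4)) +
    cbrt (-X / 2 - Real.sqrt (1 / 27 + X ^ 2 / 4))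

/-- The normalising constant `p* = (4/(9π³))·Γ(1/4)⁴`. -/
def pStar : ℝ := (4 / (9 * π ^ 3)) * Real.Gamma (1 / 4) ^ 4

/-- The displacement curve `𝒴*(X) = ∫₀^∞ db / (1 + 3Ψ₁(p*(X - b²))²)`. -/
def Ystar (X : ℝ) : ℝ :=
  ∫ b in Set.Ioi (0 : ℝ), 1 / (1 + 3 * (Psi1 (pStar * (X - b ^ 2))) ^ 2)

/-- The map `Φ(a,b) = (a + b² + p*²a³, ∫_{-∞}^b db̃/(1 + 3Ψ₁(p*(a + p*²a³ + b² - b̃²))²))`. -/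
def Phi (p : ℝ × ℝ) : ℝ × ℝ :=
  (p.1 + p.2 ^ 2 + pStar ^ 2 * p.1 ^ 3,
    ∫ t in Set.Iio p.2,
      1 / (1 + 3 * (Psi1 (pStar * (p.1 + pStar ^ 2 * p.1 ^ 3 + p.2 ^ 2 - t ^ 2))) ^ 2))

open Set Filter Topology

lemma cbrt_cube (x : ℝ) : cbrt x ^ 3 = x := by
  rcases lt_trichotomy x 0 with h | h | h
  · have h1 : |x| = -x := abs_of_neg h
    rw [cbrt, Real.sign_of_neg h, h1, mul_pow, ← Real.rpow_natCast ((-x) ^ ((1:ℝ)/3)) 3,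
      ← Real.rpow_mul (by linarith)]
    norm_num
  · simp [h, cbrt]
  · have h1 : |x| = x := abs_of_pos h
    rw [cbrt, Real.sign_of_pos h, h1, mul_pow, ← Real.rpow_natCast (x ^ ((1:ℝ)/3)) 3,
      ← Real.rpow_mul h.le]
    norm_num

lemma cube_inj : Function.Injective fun x : ℝ => x ^ 3 :=
  (Odd.strictMono_pow (by decide)).injective

lemma psi_cubic (X : ℝ) : Psi1 X + Psi1 X ^ 3 = -X := by
  set s := Real.sqrt (1 / 27 + X ^ 2 / 4) with hs
  have hsnn : (0:ℝ) ≤ 1 / 27 + X ^ 2 / 4 := by positivity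
  have hs2 : s ^ 2 = 1 / 27 + X ^ 2 / 4 := Real.sq_sqrt hsnn
  set A := -X / 2 + s
  set B := -X / 2 - s
  have hAB : A * B = -1 / 27 := by
    have : A * B = (-X/2)^2 - s^2 := by ring
    rw [this, hs2]; ring
  have hab : cbrt A * cbrt B = -1/3 := by
    apply cube_inj
    show (cbrt A * cbrt B) ^ 3 = ((-1:ℝ)/3) ^ 3
    rw [mul_pow, cbrt_cube, cbrt_cube, hAB]; norm_num
  have hA := cbrt_cube A
  have hB := cbrt_cube B
  have hP : Psi1 X = cbrt A + cbrt B := rfl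
  have hABsum : A + B = -X := by show -X/2+s + (-X/2 - s) = -X; ring
  have h3 : Psi1 X ^ 3 = A + B + 3 * (cbrt A * cbrt B) * Psi1 X := by
    rw [hP]
    have : (cbrt A + cbrt B) ^ 3 =
        cbrt A ^ 3 + cbrt B ^ 3 + 3 * (cbrt A * cbrt B) * (cbrt A + cbrt B) := by ring
    rw [this, hA, hB]
  rw [h3, hab, hABsum]; ring

lemma pStar_pos : 0 < pStar := by
  have hg : 0 < Real.Gamma (1/4) := Real.Gamma_pos_of_pos (by norm_num)
  have hp : 0 < π := Real.pi_pos
  unfold pStar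
  positivity

lemma cubic_strictMono {c : ℝ} (hc : 0 ≤ c) : StrictMono (fun u : ℝ => u + c * u ^ 3) := by
  intro x y h
  have h3 : x ^ 3 ≤ y ^ 3 := (Odd.strictMono_pow (R := ℝ) (by decide)).monotone h.le
  have := mul_le_mul_of_nonneg_left h3 hc
  simp only []
  linarith

lemma cubic_surjective {c : ℝ} (hc : 0 ≤ c) :
    Function.Surjective (fun u : ℝ => u + c * u ^ 3) := by
  have hcont : Continuous (fun u : ℝ => u + c * u ^ 3) := by continuity
  apply Continuous.surjective hcont
  · apply tendsto_atTop_mono' _ _ tendsto_id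
    filter_upwards [eventually_ge_atTop (0:ℝ)] with u hu
    have : 0 ≤ c * u ^ 3 := by positivity
    simp only [id]; linarith
  · apply tendsto_atBot_mono' _ _ tendsto_id
    filter_upwards [eventually_le_atBot (0:ℝ)] with u hu
    have h3 : u ^ 3 ≤ 0 := by
      have he : u ^ 3 = u * u ^ 2 := by ring
      rw [he]; exact mul_nonpos_of_nonpos_of_nonneg hu (sq_nonneg u)
    have : c * u ^ 3 ≤ 0 := mul_nonpos_of_nonneg_of_nonpos hc h3
    simp only [id]; linarith

lemma psi_strictAnti : StrictAnti Psi1 := by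
  intro X Y h
  by_contra hcon
  push_neg at hcon
  have h3 : Psi1 X ^ 3 ≤ Psi1 Y ^ 3 :=
    (Odd.strictMono_pow (R := ℝ) (by decide)).monotone hcon
  have h1 := psi_cubic X
  have h2 := psi_cubic Y
  linarith

lemma psi_measurable : Measurable Psi1 :=
  Antitone.measurable psi_strictAnti.antitone

/-- auxiliary integrand -/
def integrand (c t : ℝ) : ℝ := 1 / (1 + 3 * Psi1 (pStar * (c - t ^ 2)) ^ 2)

lemma integrand_pos (c t : ℝ) : 0 < integrand c t := by
  unfold integrand; positivity

lemma integrand_le_one (c t : ℝ) : integrand c t ≤ 1 := by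
  unfold integrand
  rw [div_le_one (by positivity)]
  nlinarith [sq_nonneg (Psi1 (pStar * (c - t ^ 2)))]

lemma integrand_even (c t : ℝ) : integrand c (-t) = integrand c t := by
  unfold integrand; rw [neg_pow]; norm_num

lemma integrand_measurable (c : ℝ) : Measurable (integrand c) := by
  have m1 : Measurable fun t : ℝ => Psi1 (pStar * (c - t ^ 2)) :=
    psi_measurable.comp (by fun_prop)
  unfold integrand
  have m2 : Measurable fun t : ℝ => 1 + 3 * Psi1 (pStar * (c - t ^ 2)) ^ 2 := by
    apply Measurable.const_add
    exact ((m1.pow_const 2).const_mul 3)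
  exact measurable_const.div m2

lemma psi_sq_ge {Z : ℝ} (hZ : 2 ≤ Z) : (Z/2) ^ ((2:ℝ)/3) ≤ Psi1 (-Z) ^ 2 := by
  set u := Psi1 (-Z) with hu
  have hcub : u + u ^ 3 = Z := by have := psi_cubic (-Z); rwa [neg_neg] at this
  have hu1 : 1 ≤ u := by
    by_contra hcon
    push_neg at hcon
    have h3 : u ^ 3 < 1 := by nlinarith [sq_nonneg u, sq_nonneg (u+1)]
    linarith
  have hcube : Z / 2 ≤ u ^ 3 := by
    nlinarith [mul_nonneg (mul_nonneg (sub_nonneg.2 hu1) (by linarith : (0:ℝ) ≤ u))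
      (by linarith : (0:ℝ) ≤ u + 1)]
  have h23 : ((Z/2):ℝ) ^ ((2:ℝ)/3) ≤ ((u ^ 3):ℝ) ^ ((2:ℝ)/3) :=
    Real.rpow_le_rpow (by linarith) hcube (by norm_num)
  have heq : ((u ^ 3):ℝ) ^ ((2:ℝ)/3) = u ^ 2 := by
    rw [← Real.rpow_natCast u 3, ← Real.rpow_mul (by linarith : (0:ℝ) ≤ u)]
    norm_num
  rwa [heq] at h23

lemma integrand_integrable (c : ℝ) : Integrable (integrand c) := by
  set R : ℝ := max 1 (Real.sqrt (2 * |c| + 4 / pStar)) with hR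
  have hR1 : (1:ℝ) ≤ R := le_max_left _ _
  have hR0 : (0:ℝ) < R := by linarith
  have hRsq : 2 * |c| + 4 / pStar ≤ R ^ 2 := by
    have h1 : Real.sqrt (2 * |c| + 4 / pStar) ≤ R := le_max_right _ _
    have h2 : 0 ≤ 2 * |c| + 4 / pStar :=
      add_nonneg (by positivity) (le_of_lt (div_pos four_pos pStar_pos))
    nlinarith [Real.sq_sqrt h2, Real.sqrt_nonneg (2 * |c| + 4 / pStar)]
  -- key pointwise bound for |t| ≥ R
  have key : ∀ t : ℝ, R ≤ |t| → integrand c t ≤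
      (1 / (3 * (pStar/4) ^ ((2:ℝ)/3))) * (|t| ^ ((-4:ℝ)/3)) := by
    intro t ht
    have ht0 : 0 < |t| := lt_of_lt_of_le hR0 ht
    have htsq : R ^ 2 ≤ t ^ 2 := by
      nlinarith [sq_abs t, mul_le_mul ht ht (le_of_lt hR0) (abs_nonneg t)]
    have hps := pStar_pos
    have hZ2 : 2 ≤ pStar * (t ^ 2 - c) := by
      have h1 : 4 / pStar ≤ t ^ 2 - c := by
        have := le_abs_self c
        have := abs_nonneg c
        linarith
      calc (2:ℝ) ≤ pStar * (4 / pStar) := by rw [mul_div_cancel₀ _ (ne_of_gt hps)]; norm_num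
        _ ≤ pStar * (t ^ 2 - c) := by nlinarith
    have hZt : pStar * t ^ 2 / 4 ≤ pStar * (t ^ 2 - c) / 2 := by
      have : c ≤ |c| := le_abs_self c
      have h2 : 2 * |c| ≤ t ^ 2 := by nlinarith [div_nonneg (by norm_num : (0:ℝ) ≤ 4) hps.le]
      nlinarith
    have hpsi : (pStar * (t ^ 2 - c) / 2) ^ ((2:ℝ)/3) ≤
        Psi1 (pStar * (c - t ^ 2)) ^ 2 := by
      have := psi_sq_ge hZ2
      have harg : -(pStar * (t ^ 2 - c)) = pStar * (c - t ^ 2) := by ring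
      rwa [harg] at this
    have hlow : (pStar * t ^ 2 / 4) ^ ((2:ℝ)/3) ≤ Psi1 (pStar * (c - t ^ 2)) ^ 2 :=
      le_trans (Real.rpow_le_rpow (by positivity) hZt (by norm_num)) hpsi
    have hsplit : (pStar * t ^ 2 / 4) ^ ((2:ℝ)/3)
        = (pStar / 4) ^ ((2:ℝ)/3) * (|t| ^ ((4:ℝ)/3)) := by
      have h1 : pStar * t ^ 2 / 4 = (pStar / 4) * |t| ^ 2 := by
        rw [sq_abs]; ring
      rw [h1, Real.mul_rpow (by positivity) (by positivity),
        ← Real.rpow_natCast |t| 2, ← Real.rpow_mul (abs_nonneg t)]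
      norm_num
    have hden : (3 * (pStar/4) ^ ((2:ℝ)/3)) * (|t| ^ ((4:ℝ)/3)) ≤
        1 + 3 * Psi1 (pStar * (c - t ^ 2)) ^ 2 := by
      have := hlow
      rw [hsplit] at this
      nlinarith
    have hposd : (0:ℝ) < (3 * (pStar/4) ^ ((2:ℝ)/3)) * (|t| ^ ((4:ℝ)/3)) := by positivity
    have h2 : integrand c t ≤ 1 / ((3 * (pStar/4) ^ ((2:ℝ)/3)) * (|t| ^ ((4:ℝ)/3))) := by
      unfold integrand
      exact one_div_le_one_div_of_le hposd hden
    calc integrand c t ≤ 1 / ((3 * (pStar/4) ^ ((2:ℝ)/3)) * (|t| ^ ((4:ℝ)/3))) := h2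
      _ = (1 / (3 * (pStar/4) ^ ((2:ℝ)/3))) * (|t| ^ ((-4:ℝ)/3)) := by
          have hneg : |t| ^ ((-4:ℝ)/3) = (|t| ^ ((4:ℝ)/3))⁻¹ := by
            rw [← Real.rpow_neg (abs_nonneg t)]; norm_num
          rw [hneg]; ring
  have hmeas := integrand_measurable c
  have hIoi : IntegrableOn (integrand c) (Ioi R) := by
    have hint : IntegrableOn
        (fun t : ℝ => (1 / (3 * (pStar/4) ^ ((2:ℝ)/3))) * (t ^ ((-4:ℝ)/3))) (Ioi R) :=
      (integrableOn_Ioi_rpow_of_lt (by norm_num) hR0).const_mul _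
    apply Integrable.mono' hint hmeas.aestronglyMeasurable.restrict
    rw [ae_restrict_iff' measurableSet_Ioi]
    filter_upwards with t ht
    have htR : R < t := ht
    have habs : |t| = t := abs_of_pos (lt_trans hR0 htR)
    rw [Real.norm_eq_abs, abs_of_pos (integrand_pos c t)]
    have hk := key t (by rw [habs]; exact le_of_lt htR)
    rwa [habs] at hk
  have hIio : IntegrableOn (integrand c) (Iio (-R)) := by
    have h := (Measure.measurePreserving_neg (volume : Measure ℝ)).integrableOn_comp_preimage
      (Homeomorph.neg ℝ).measurableEmbedding (f := integrand c) (s := Iio (-R))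
    apply h.1
    have hset : (Neg.neg ⁻¹' Iio (-R) : Set ℝ) = Ioi R := by
      ext x; simp
    have hfun : (integrand c ∘ Neg.neg) = integrand c := by
      funext t; simp only [Function.comp_apply]; exact integrand_even c t
    rw [hset, hfun]
    exact hIoi
  have hIcc : IntegrableOn (integrand c) (Icc (-R) R) := by
    apply Integrable.mono' (g := fun _ : ℝ => (1:ℝ))
    · exact integrableOn_const (by rw [Real.volume_Icc]; exact ENNReal.ofReal_ne_top)
    · exact hmeas.aestronglyMeasurable.restrict
    · filter_upwards with t
      rw [Real.norm_eq_abs, abs_of_pos (integrand_pos c t)]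
      exact integrand_le_one c t
  have huniv : IntegrableOn (integrand c) univ := by
    have := (hIio.union hIcc).union hIoi
    apply this.mono_set
    intro x _
    rcases lt_trichotomy x (-R) with h | h | h
    · exact Or.inl (Or.inl h)
    · exact Or.inl (Or.inr ⟨le_of_eq h.symm, by linarith⟩)
    · rcases le_or_gt x R with h2 | h2
      · exact Or.inl (Or.inr ⟨by linarith, h2⟩)
      · exact Or.inr h2
  rwa [integrableOn_univ] at huniv

/-- cumulative integral -/
def Fc (c b : ℝ) : ℝ := ∫ t in Iio b, integrand c t

lemma Fc_eq_Iic (c b : ℝ) : Fc c b = ∫ t in Iic b, integrand c t :=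
  setIntegral_congr_set Iio_ae_eq_Iic

lemma Fc_sub (c b1 b2 : ℝ) : Fc c b2 - Fc c b1 = ∫ t in b1..b2, integrand c t := by
  rw [Fc_eq_Iic, Fc_eq_Iic]
  exact intervalIntegral.integral_Iic_sub_Iic (integrand_integrable c).integrableOn
    (integrand_integrable c).integrableOn

lemma Fc_strictMono (c : ℝ) : StrictMono (Fc c) := by
  intro b1 b2 h
  have hpos : 0 < ∫ t in b1..b2, integrand c t :=
    intervalIntegral.intervalIntegral_pos_of_pos
      ((integrand_integrable c).intervalIntegrable) (integrand_pos c) h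
  have := Fc_sub c b1 b2
  linarith

lemma Fc_nonneg (c b : ℝ) : 0 ≤ Fc c b :=
  setIntegral_nonneg measurableSet_Iio fun t _ => (integrand_pos c t).le

lemma Fc_continuous (c : ℝ) : Continuous (Fc c) := by
  have h : Continuous fun b => ∫ t in (0:ℝ)..b, integrand c t :=
    intervalIntegral.continuous_primitive
      (fun _ _ => (integrand_integrable c).intervalIntegrable) 0
  have he : Fc c = fun b => Fc c 0 + ∫ t in (0:ℝ)..b, integrand c t := by
    funext b; have := Fc_sub c 0 b; linarith
  rw [he]
  exact continuous_const.add h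

lemma Fc_tendsto_atBot (c : ℝ) : Tendsto (Fc c) atBot (𝓝 0) := by
  have h0 : Tendsto (fun a => ∫ t in a..(0:ℝ), integrand c t) atBot
      (𝓝 (∫ t in Iic (0:ℝ), integrand c t)) :=
    intervalIntegral_tendsto_integral_Iic 0 (integrand_integrable c).integrableOn tendsto_id
  have heq : ∀ a, Fc c a = Fc c 0 - ∫ t in a..(0:ℝ), integrand c t := fun a => by
    have := Fc_sub c a 0; linarith
  have key := (tendsto_const_nhds (x := Fc c 0) (f := atBot)).sub h0
  have h2 : Fc c 0 - ∫ t in Iic (0:ℝ), integrand c t = 0 := by rw [Fc_eq_Iic]; ring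
  rw [h2] at key
  exact key.congr fun a => (heq a).symm

lemma Fc_zero_eq (c : ℝ) : Fc c 0 = ∫ t in Ioi (0:ℝ), integrand c t := by
  rw [Fc_eq_Iic]
  have h := integral_comp_neg_Ioi (c := (0:ℝ)) (f := integrand c)
  rw [neg_zero] at h
  rw [← h]
  exact setIntegral_congr_fun measurableSet_Ioi fun t _ => integrand_even c t

lemma Ystar_eq (c : ℝ) : Ystar c = ∫ t in Ioi (0:ℝ), integrand c t := rfl

lemma Fc_tendsto_atTop (c : ℝ) : Tendsto (Fc c) atTop (𝓝 (2 * Ystar c)) := by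
  have h0 : Tendsto (fun b => ∫ t in (0:ℝ)..b, integrand c t) atTop
      (𝓝 (∫ t in Ioi (0:ℝ), integrand c t)) :=
    intervalIntegral_tendsto_integral_Ioi 0 (integrand_integrable c).integrableOn tendsto_id
  have heq : ∀ b, Fc c b = Fc c 0 + ∫ t in (0:ℝ)..b, integrand c t := fun b => by
    have := Fc_sub c 0 b; linarith
  have key := (tendsto_const_nhds (x := Fc c 0) (f := atTop)).add h0
  have h2 : Fc c 0 + ∫ t in Ioi (0:ℝ), integrand c t = 2 * Ystar c := by
    rw [Fc_zero_eq, Ystar_eq]; ring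
  rw [h2] at key
  exact key.congr fun b => (heq b).symm

lemma Fc_lt_top (c b : ℝ) : Fc c b < 2 * Ystar c := by
  have h1 : Fc c b < Fc c (b + 1) := Fc_strictMono c (by linarith)
  have h2 : Fc c (b + 1) ≤ 2 * Ystar c := by
    apply ge_of_tendsto (Fc_tendsto_atTop c)
    filter_upwards [eventually_ge_atTop (b + 1)] with y hy
    exact (Fc_strictMono c).monotone hy
  linarith

lemma Fc_pos (c b : ℝ) : 0 < Fc c b :=
  lt_of_le_of_lt (Fc_nonneg c (b - 1)) (Fc_strictMono c (by linarith))

lemma Phi_snd (p : ℝ × ℝ) : (Phi p).2 = Fc (p.1 + pStar ^ 2 * p.1 ^ 3 + p.2 ^ 2) p.2 := rfl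

/-- `Φ` is a bijection from `ℝ²` onto the region `{(X,Y) : 0 < Y < 2𝒴*(X)}`. -/
theorem Phi_bijective :
    Function.Injective Phi ∧
    Set.range Phi = {q : ℝ × ℝ | 0 < q.2 ∧ q.2 < 2 * Ystar q.1} := by
  constructor
  · intro p q hpq
    rw [Prod.ext_iff] at hpq
    obtain ⟨hX, hY⟩ := hpq
    have hX' : p.1 + p.2 ^ 2 + pStar ^ 2 * p.1 ^ 3 = q.1 + q.2 ^ 2 + pStar ^ 2 * q.1 ^ 3 := hX
    have hce : p.1 + pStar ^ 2 * p.1 ^ 3 + p.2 ^ 2 = q.1 + pStar ^ 2 * q.1 ^ 3 + q.2 ^ 2 := by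
      linarith
    rw [Phi_snd, Phi_snd, hce] at hY
    have hb : p.2 = q.2 := (Fc_strictMono _).injective hY
    have ha : p.1 = q.1 := by
      have h1 : p.1 + pStar ^ 2 * p.1 ^ 3 = q.1 + pStar ^ 2 * q.1 ^ 3 := by
        rw [hb] at hX'; linarith
      exact (cubic_strictMono (sq_nonneg pStar)).injective h1
    exact Prod.ext ha hb
  · ext q
    simp only [Set.mem_range, mem_setOf_eq]
    constructor
    · rintro ⟨p, rfl⟩
      rw [Phi_snd]
      set e := p.1 + pStar ^ 2 * p.1 ^ 3 + p.2 ^ 2 with he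
      have h1 : (Phi p).1 = e := by show p.1 + p.2 ^ 2 + pStar ^ 2 * p.1 ^ 3 = e; rw [he]; ring
      rw [h1]
      exact ⟨Fc_pos e p.2, Fc_lt_top e p.2⟩
    · rintro ⟨hY0, hY2⟩
      obtain ⟨b1, hb1⟩ : ∃ b1, Fc q.1 b1 < q.2 :=
        ((Fc_tendsto_atBot q.1).eventually (eventually_lt_nhds hY0)).exists
      obtain ⟨b2, hb2⟩ : ∃ b2, q.2 < Fc q.1 b2 :=
        ((Fc_tendsto_atTop q.1).eventually (eventually_gt_nhds hY2)).exists
      have hiv := intermediate_value_univ b1 b2 (Fc_continuous q.1)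
      obtain ⟨b, hb⟩ := hiv ⟨hb1.le, hb2.le⟩
      obtain ⟨a, ha⟩ := cubic_surjective (sq_nonneg pStar) (q.1 - b ^ 2)
      have ha' : a + pStar ^ 2 * a ^ 3 = q.1 - b ^ 2 := ha
      refine ⟨(a, b), ?_⟩
      have h1 : (Phi (a, b)).1 = q.1 := by
        show a + b ^ 2 + pStar ^ 2 * a ^ 3 = q.1; linarith
      have h2 : (Phi (a, b)).2 = q.2 := by
        rw [Phi_snd]
        have he : a + pStar ^ 2 * a ^ 3 + b ^ 2 = q.1 := by linarith
        show Fc (a + pStar ^ 2 * a ^ 3 + b ^ 2) b = q.2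
        rw [he]; exact hb
      exact Prod.ext h1 h2
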